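/- Let L be a field and D a geometrically integral L-algebra of transcendence degree 1 over L which is finitely generated over L. If D admits a non-trivial exponential map, then D is isomorphic as an L-algebra to the polynomial ring in one variable over L. -/

import Mathlib

open Polynomial

/-- A `k`-algebra homomorphism `φ : A → A[U]` is an *exponential map* if evaluating `U` at `0`
gives the identity and `φ_V φ_U = φ_{V+U}` (comultiplicativity). -/
def IsExponentialMap {k A : Type*} [CommSemiring k] [CommSemiring A] [Algebra k A]
    (φ : A →ₐ[k] A[X]) : Prop :=
  (∀ a : A, (φ a).eval 0 = a) ∧
  (∀ a : A, (φ a).map (φ : A →+* A[X]) =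
      (φ a).eval₂ ((C : A[X] →+* A[X][X]).comp (C : A →+* A[X])) (C X + X))

/-- The ring of invariants `A^φ = {a ∈ A | φ(a) = a}` of a `k`-algebra map `φ : A → A[U]`,
as a subalgebra of `A`. -/
def expInv {k A : Type*} [CommSemiring k] [CommSemiring A] [Algebra k A]
    (φ : A →ₐ[k] A[X]) : Subalgebra k A where
  carrier := {a | φ a = C a}
  mul_mem' := fun {a b} ha hb => by
    simp only [Set.mem_setOf_eq] at *
    rw [map_mul, ha, hb, ← C_mul]
  add_mem' := fun {a b} ha hb => by
    simp only [Set.mem_setOf_eq] at *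
    rw [map_add, ha, hb, ← C_add]
  algebraMap_mem' := fun r => by
    simp only [Set.mem_setOf_eq, AlgHom.commutes, Polynomial.algebraMap_apply]

/-- An exponential map is non-trivial if its ring of invariants is a proper subring. -/
def IsNontrivialExpMap {k A : Type*} [CommSemiring k] [CommSemiring A] [Algebra k A]
    (φ : A →ₐ[k] A[X]) : Prop :=
  IsExponentialMap φ ∧ expInv φ ≠ ⊤

/-- The Derksen invariant: the `k`-subalgebra of `A` generated by the invariants of all
non-trivial exponential maps on `A`. -/
def DerksenInvariant (k A : Type*) [CommSemiring k] [CommSemiring A] [Algebra k A] :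
    Subalgebra k A :=
  Algebra.adjoin k {a : A | ∃ φ : A →ₐ[k] A[X], IsNontrivialExpMap φ ∧ a ∈ expInv φ}

/-- The transcendence degree of a commutative `k`-algebra `A`: the supremum of the
cardinalities of algebraically independent subsets of `A`. -/
noncomputable def trdeg (k A : Type*) [CommRing k] [CommRing A] [Algebra k A] : Cardinal :=
  ⨆ s : {s : Set A // AlgebraicIndependent k ((↑) : s → A)}, Cardinal.mk s.1

section Aux
variable {L D : Type} [Field L] [CommRing D] [Algebra L D]
variable (φ : D →ₐ[L] D[X])

theorem phi_coeff (a : D) (i : ℕ)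
    (h2 : (φ a).map (φ : D →+* D[X]) =
      (φ a).eval₂ ((C : D[X] →+* D[X][X]).comp (C : D →+* D[X])) (C X + X)) :
    φ ((φ a).coeff i) = ∑ j ∈ Finset.range ((φ a).natDegree + 1),
      C ((j.choose i : D) * (φ a).coeff j) * X ^ (j - i) := by
  have h := congrArg (fun q => q.coeff i) h2
  simp only [coeff_map] at h
  rw [Polynomial.eval₂_eq_sum_range] at h
  rw [Polynomial.finset_sum_coeff] at h
  refine h.trans (Finset.sum_congr rfl fun j _ => ?_)
  rw [RingHom.comp_apply, coeff_C_mul, add_comm (C X) X, coeff_X_add_C_pow,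
    map_mul, ← Polynomial.C_eq_natCast]
  ring

theorem lc_mem (a : D)
    (h2 : (φ a).map (φ : D →+* D[X]) =
      (φ a).eval₂ ((C : D[X] →+* D[X][X]).comp (C : D →+* D[X])) (C X + X)) :
    (φ a).leadingCoeff ∈ expInv φ := by
  show φ _ = C _
  rw [Polynomial.leadingCoeff, phi_coeff φ a _ h2,
    Finset.sum_eq_single ((φ a).natDegree)]
  · simp
  · intro j hj hne
    have hlt : j < (φ a).natDegree := by
      simp only [Finset.mem_range] at hj; omega
    rw [Nat.choose_eq_zero_of_lt hlt]
    simp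
  · intro h; simp at h

theorem exists_deg [IsDomain D] {b : D} {i : ℕ} (h0 : 0 < i) (him : i ≤ (φ b).natDegree)
    (hbin : (((φ b).natDegree.choose i : ℕ) : D) ≠ 0)
    (h2 : (φ b).map (φ : D →+* D[X]) =
      (φ b).eval₂ ((C : D[X] →+* D[X][X]).comp (C : D →+* D[X])) (C X + X)) :
    ∃ e : D, (φ e).natDegree = i := by
  set m := (φ b).natDegree with hm
  refine ⟨(φ b).coeff (m - i), ?_⟩
  have hkey := phi_coeff φ b (m - i) h2
  rw [← hm] at hkey
  have hb0 : φ b ≠ 0 := Polynomial.ne_zero_of_natDegree_gt (n := 0) (by omega)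
  have hcoeff : (φ ((φ b).coeff (m - i))).coeff i = (m.choose (m - i) : D) * (φ b).coeff m := by
    rw [hkey, Polynomial.finset_sum_coeff, Finset.sum_eq_single m]
    · rw [coeff_C_mul, coeff_X_pow, if_pos (by omega)]; ring
    · intro j hj hne
      simp only [Finset.mem_range] at hj
      rw [coeff_C_mul, coeff_X_pow, if_neg (by omega)]
      ring
    · intro h; simp at h
  have hcm : (φ b).coeff m = (φ b).leadingCoeff := rfl
  have hne : (φ ((φ b).coeff (m - i))).coeff i ≠ 0 := by
    rw [hcoeff, hcm, Nat.choose_symm him]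
    exact mul_ne_zero hbin (Polynomial.leadingCoeff_ne_zero.2 hb0)
  refine le_antisymm ?_ (Polynomial.le_natDegree_of_ne_zero hne)
  rw [hkey]
  refine Polynomial.natDegree_sum_le_of_forall_le _ _ fun j hj => ?_
  simp only [Finset.mem_range] at hj
  exact (Polynomial.natDegree_C_mul_X_pow_le _ _).trans (by omega)

theorem mem_expInv_of_natDegree_eq_zero (hφ0 : ∀ a : D, (φ a).eval 0 = a) {x : D}
    (h : (φ x).natDegree = 0) : x ∈ expInv φ := by
  show φ x = C x
  have h1 := Polynomial.eq_C_of_natDegree_eq_zero h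
  rw [h1]
  congr 1
  have h2 := hφ0 x
  rw [h1] at h2
  simpa using h2

theorem natDegree_eq_zero_of_isAlgebraic [IsDomain D] (hφ0 : ∀ a : D, (φ a).eval 0 = a)
    {x : D} (hx : IsAlgebraic L x) : (φ x).natDegree = 0 := by
  obtain ⟨p, hp0, hpx⟩ := hx
  have hinj : Function.Injective (algebraMap L D) := RingHom.injective _
  have hP0 : p.map (algebraMap L D) ≠ 0 := by
    rwa [Ne, Polynomial.map_eq_zero_iff hinj]
  have h1 : Polynomial.aeval (φ x) p = 0 := by
    rw [Polynomial.aeval_algHom_apply, hpx, map_zero]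
  have hcomp : (p.map (algebraMap L D)).comp (φ x) = 0 := by
    have heq : (C : D →+* D[X]).comp (algebraMap L D) = algebraMap L D[X] := by
      ext r
      simp [Polynomial.algebraMap_apply]
    rw [Polynomial.comp, Polynomial.eval₂_map, heq, ← Polynomial.aeval_def, h1]
  rcases Polynomial.comp_eq_zero_iff.1 hcomp with h | h
  · exact absurd h hP0
  · rw [h.2]; exact Polynomial.natDegree_C _

theorem isAlgebraic_of_mem_expInv [IsDomain D] (htd : trdeg L D = 1)
    (hφ0 : ∀ a : D, (φ a).eval 0 = a) {w b : D} (hw : w ∉ expInv φ) (hb : b ∈ expInv φ) :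
    IsAlgebraic L b := by
  by_contra htr
  have hsing : AlgebraicIndependent L (fun _ : Unit => b) :=
    algebraicIndependent_unique_type_iff.2 htr
  have hwa : IsAlgebraic (Algebra.adjoin L (Set.range (fun _ : Unit => b))) w := by
    by_contra hwt
    have hopt : AlgebraicIndependent L fun o : Option Unit => o.elim w (fun _ => b) :=
      (hsing.option_iff_transcendental w).2 hwt
    have hrange := hopt.to_subtype_range
    have hr : Set.range (fun o : Option Unit => o.elim w (fun _ => b)) = {w, b} := by
      ext y
      constructor
      · rintro ⟨(_ | u), rfl⟩ <;> simp
      · rintro (rfl | rfl)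
        exacts [⟨none, rfl⟩, ⟨some (), rfl⟩]
    rw [hr] at hrange
    have hle : Cardinal.mk ({w, b} : Set D) ≤ trdeg L D :=
      le_ciSup (Cardinal.bddAbove_range _)
        (⟨{w, b}, hrange⟩ : {s : Set D // AlgebraicIndependent L ((↑) : s → D)})
    have hwb : w ≠ b := fun h => hw (h ▸ hb)
    rw [Cardinal.mk_insert (by simpa using hwb), Cardinal.mk_singleton, htd] at hle
    norm_num at hle
  have hSle : Algebra.adjoin L (Set.range (fun _ : Unit => b)) ≤ expInv φ := by
    apply Algebra.adjoin_le
    rintro y ⟨u, rfl⟩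
    exact hb
  set S := Algebra.adjoin L (Set.range (fun _ : Unit => b)) with hSdef
  obtain ⟨P, hP0, hPw⟩ := hwa
  have hinj : Function.Injective (algebraMap S D) := Subtype.val_injective
  have hcomp : (P.map (algebraMap S D)).comp (φ w) = 0 := by
    have h1 : (φ : D →+* D[X]) (Polynomial.aeval w P) = 0 := by
      rw [hPw]; exact map_zero _
    rw [Polynomial.aeval_def, Polynomial.hom_eval₂] at h1
    have heq : (φ : D →+* D[X]).comp (algebraMap S D) =
        (C : D →+* D[X]).comp (algebraMap S D) :=
      RingHom.ext fun r => hSle r.2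
    rw [heq, ← Polynomial.eval₂_map] at h1
    exact h1
  rcases Polynomial.comp_eq_zero_iff.1 hcomp with h | h
  · exact hP0 ((Polynomial.map_eq_zero_iff hinj).1 h)
  · exact hw (mem_expInv_of_natDegree_eq_zero φ hφ0 (by rw [h.2]; exact Polynomial.natDegree_C _))
end Aux

section Tensor
variable {L D : Type} [Field L] [CommRing D] [Algebra L D]

theorem exists_retraction :
    ∃ ℓ : (AlgebraicClosure L) →ₗ[L] L, ℓ 1 = 1 := by
  have h1 : LinearIndepOn L id ({1} : Set (AlgebraicClosure L)) :=
    LinearIndepOn.singleton one_ne_zero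
  let B := Module.Basis.extend h1
  have hmem : (1 : AlgebraicClosure L) ∈ h1.extend (Set.subset_univ _) :=
    h1.subset_extend _ rfl
  refine ⟨B.coord ⟨1, hmem⟩, ?_⟩
  have hb : B ⟨1, hmem⟩ = 1 := Module.Basis.extend_apply_self h1 ⟨1, hmem⟩
  have hc : B.coord ⟨1, hmem⟩ (B ⟨1, hmem⟩) = 1 := by
    rw [Module.Basis.coord_apply, Module.Basis.repr_self, Finsupp.single_eq_same]
  rwa [hb] at hc

theorem tensor_retract_exists :
    ∃ μ : TensorProduct L D (AlgebraicClosure L) →ₗ[L] D,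
      (∀ x : D, μ (x ⊗ₜ 1) = x) ∧
      (∀ r : AlgebraicClosure L, ∃ l : L, μ (1 ⊗ₜ r) = algebraMap L D l) := by
  obtain ⟨ℓ, hℓ⟩ := exists_retraction (L := L)
  refine ⟨(TensorProduct.rid L D).toLinearMap.comp (LinearMap.lTensor D ℓ), fun x => ?_,
    fun r => ⟨ℓ r, ?_⟩⟩
  · simp [hℓ]
  · simp [Algebra.algebraMap_eq_smul_one]

theorem injective_includeLeft
    (hgi : IsDomain (TensorProduct L D (AlgebraicClosure L))) :
    Function.Injective
      (Algebra.TensorProduct.includeLeft : D →ₐ[L] TensorProduct L D (AlgebraicClosure L)) := by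
  obtain ⟨μ, hμ1, _⟩ := tensor_retract_exists (L := L) (D := D)
  intro x y hxy
  have := congrArg μ hxy
  simpa only [Algebra.TensorProduct.includeLeft_apply, hμ1] using this

theorem isDomain_of_tensor
    (hgi : IsDomain (TensorProduct L D (AlgebraicClosure L))) : IsDomain D :=
  Function.Injective.isDomain
    (Algebra.TensorProduct.includeLeft :
      D →ₐ[L] TensorProduct L D (AlgebraicClosure L)).toRingHom
    (injective_includeLeft hgi)

theorem isAlgebraic_mem_range
    (hgi : IsDomain (TensorProduct L D (AlgebraicClosure L)))
    {x : D} (hx : IsAlgebraic L x) : ∃ l : L, algebraMap L D l = x := by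
  haveI : IsDomain D := isDomain_of_tensor hgi
  set K := AlgebraicClosure L
  set T := TensorProduct L D K with hT
  set f := minpoly L x with hf
  have hmonic : f.Monic := minpoly.monic hx.isIntegral
  set z : T := (Algebra.TensorProduct.includeLeft : D →ₐ[L] T) x with hz
  have haev : Polynomial.aeval z f = 0 := by
    rw [hz, Polynomial.aeval_algHom_apply, minpoly.aeval, map_zero]
  have hsplit : (f.map (algebraMap L K)).Splits :=
    IsAlgClosed.splits _
  have hprod : f.map (algebraMap L K) =
      ((f.map (algebraMap L K)).roots.map (fun r => X - C r)).prod :=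
    hsplit.eq_prod_roots_of_monic (hmonic.map _)
  have heval : Polynomial.aeval z f =
      Polynomial.eval₂
        ((Algebra.TensorProduct.includeRight : K →ₐ[L] T).toRingHom.comp (algebraMap L K)) z f := by
    rw [Polynomial.aeval_def]
    congr 1
    ext l
    simp
    rfl
  rw [heval, ← Polynomial.eval₂_map, hprod, Polynomial.eval₂_multiset_prod] at haev
  have h0 : (0 : T) ∈ ((f.map (algebraMap L K)).roots.map (fun r => X - C r)).map
      (Polynomial.eval₂ (Algebra.TensorProduct.includeRight : K →ₐ[L] T).toRingHom z) :=
    Multiset.prod_eq_zero_iff.1 haev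
  rw [Multiset.mem_map] at h0
  obtain ⟨g, hg, hg0⟩ := h0
  rw [Multiset.mem_map] at hg
  obtain ⟨r, _, rfl⟩ := hg
  rw [Polynomial.eval₂_sub, Polynomial.eval₂_X, Polynomial.eval₂_C, sub_eq_zero] at hg0
  obtain ⟨μ, hμ1, hμ2⟩ := tensor_retract_exists (L := L) (D := D)
  obtain ⟨l, hl⟩ := hμ2 r
  refine ⟨l, ?_⟩
  have h2 : μ z = x := by
    rw [hz, Algebra.TensorProduct.includeLeft_apply]
    exact hμ1 x
  rw [← hl, ← h2, hg0]
  rfl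

end Tensor

theorem nt_choose {p : ℕ} (hp : p.Prime) (v u : ℕ) :
    Nat.choose (p ^ v * u) (p ^ v) ≡ u [MOD p] := by
  haveI : Fact p.Prime := ⟨hp⟩
  induction v with
  | zero => simpa [Nat.choose_one_right] using Nat.ModEq.refl u
  | succ v ih =>
    have h := Choose.choose_modEq_choose_mod_mul_choose_div_nat (p := p)
        (n := p ^ (v + 1) * u) (k := p ^ (v + 1))
    have hp0 : 0 < p := hp.pos
    have hdvd1 : p ∣ p ^ (v + 1) := dvd_pow_self p (Nat.succ_ne_zero v)
    have e0 : p ^ (v + 1) * u % p = 0 := Nat.mod_eq_zero_of_dvd (hdvd1.mul_right u)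
    have e1 : p ^ (v + 1) % p = 0 := Nat.mod_eq_zero_of_dvd hdvd1
    have e2 : p ^ (v + 1) * u / p = p ^ v * u := by
      rw [pow_succ, mul_comm (p ^ v) p, mul_assoc, Nat.mul_div_cancel_left _ hp0]
    have e3 : p ^ (v + 1) / p = p ^ v := by
      rw [pow_succ, Nat.mul_div_cancel _ hp0]
    rw [e0, e1, e2, e3] at h
    simp only [Nat.choose_self, one_mul] at h
    exact h.trans ih

theorem nt_choose_ne_zero {p : ℕ} (hp : p.Prime) {u : ℕ} (hu : ¬ p ∣ u) (v : ℕ) :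
    ¬ p ∣ Nat.choose (p ^ v * u) (p ^ v) := by
  intro hd
  apply hu
  have h1 : Nat.choose (p ^ v * u) (p ^ v) ≡ 0 [MOD p] :=
    (Nat.modEq_zero_iff_dvd).2 hd
  exact (Nat.modEq_zero_iff_dvd).1 ((nt_choose hp v u).symm.trans h1)


/-- **Lemma 3.1**: a geometrically integral affine `L`-algebra of transcendence degree one
admitting a non-trivial exponential map is a polynomial ring in one variable over `L`. -/
theorem geometrically_integral_trdeg_one {L D : Type} [Field L] [CommRing D]
    [Algebra L D] [Algebra.FiniteType L D]
    (hgi : IsDomain (TensorProduct L D (AlgebraicClosure L)))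
    (htd : trdeg L D = 1)
    (φ : D →ₐ[L] D[X]) (hφ : IsExponentialMap φ) (hnt : expInv φ ≠ ⊤) :
    Nonempty (D ≃ₐ[L] Polynomial L) := by
  classical
  haveI hD : IsDomain D := isDomain_of_tensor hgi
  obtain ⟨hφ0, hφ2⟩ := hφ
  obtain ⟨w, hw⟩ : ∃ w : D, w ∉ expInv φ := by
    by_contra h
    push_neg at h
    exact hnt (top_unique fun x _ => h x)
  have hinv : ∀ x ∈ expInv φ, ∃ l : L, algebraMap L D l = x := fun x hx =>
    isAlgebraic_mem_range hgi (isAlgebraic_of_mem_expInv φ htd hφ0 hw hx)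
  have hphi0 : ∀ x : D, φ x = 0 → x = 0 := fun x h => by
    have h2 := hφ0 x
    rw [h] at h2
    simpa using h2.symm
  have hdegw : (φ w).natDegree ≠ 0 := fun h => hw (mem_expInv_of_natDegree_eq_zero φ hφ0 h)
  have hex : ∃ n, 0 < n ∧ ∃ x : D, (φ x).natDegree = n :=
    ⟨(φ w).natDegree, Nat.pos_of_ne_zero hdegw, w, rfl⟩
  obtain ⟨hn₀pos, t, ht⟩ := Nat.find_spec hex
  set n₀ := Nat.find hex with hn₀def
  have hmin : ∀ m, 0 < m → (∃ x : D, (φ x).natDegree = m) → n₀ ≤ m :=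
    fun m h1 h2 => Nat.find_min' hex ⟨h1, h2⟩
  have halgInj : Function.Injective (algebraMap L D) := RingHom.injective _
  have hchoose : ∀ (x : D) (i : ℕ), 0 < i → i ≤ (φ x).natDegree →
      (((φ x).natDegree.choose i : ℕ) : D) ≠ 0 → n₀ ≤ i := fun x i h0 hi hb =>
    hmin i h0 (exists_deg φ h0 hi hb (hφ2 x))
  -- divisibility of all degrees by the minimal positive degree
  have hdvd : ∀ x : D, n₀ ∣ (φ x).natDegree := by
    rcases CharP.char_is_prime_or_zero L (ringChar L) with hp | hp0
    · -- positive characteristic p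
      set p := ringChar L with hpdef
      haveI : CharP L p := ringChar.charP L
      haveI : CharP D p := charP_of_injective_algebraMap halgInj p
      have key : ∀ x : D, (φ x).natDegree ≠ 0 →
          ∃ v u, ¬ p ∣ u ∧ (φ x).natDegree = p ^ v * u ∧ n₀ ≤ p ^ v := by
        intro x hx0
        obtain ⟨v, u, hu, he⟩ := Nat.exists_eq_pow_mul_and_not_dvd hx0 p hp.ne_one
        refine ⟨v, u, hu, he, ?_⟩
        have hupos : 0 < u := Nat.pos_of_ne_zero fun h => hu (h ▸ dvd_zero p)
        have hple : p ^ v ≤ (φ x).natDegree := by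
          rw [he]
          exact Nat.le_mul_of_pos_right _ hupos
        refine hchoose x (p ^ v) (pow_pos hp.pos v) hple ?_
        rw [he, Ne, CharP.cast_eq_zero_iff D p]
        exact nt_choose_ne_zero hp hu v
      obtain ⟨v₀, u₀, hu₀, he₀, hle₀⟩ := key t (by omega)
      rw [ht] at he₀
      have hu₀pos : 0 < u₀ := Nat.pos_of_ne_zero fun h => hu₀ (h ▸ dvd_zero p)
      have hn₀eq : n₀ = p ^ v₀ := by
        have hge : p ^ v₀ ≤ n₀ := by
          rw [he₀]
          exact Nat.le_mul_of_pos_right _ hu₀pos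
        omega
      intro x
      by_cases hx0 : (φ x).natDegree = 0
      · rw [hx0]; exact dvd_zero _
      · obtain ⟨v, u, hu, he, hle⟩ := key x hx0
        rw [hn₀eq] at hle ⊢
        have hvv : v₀ ≤ v := (pow_le_pow_iff_right₀ hp.one_lt).1 hle
        rw [he]
        exact (pow_dvd_pow p hvv).mul_right u
    · -- characteristic zero
      haveI : CharP L 0 := hp0 ▸ ringChar.charP L
      haveI : CharZero L := CharP.charP_to_charZero L
      haveI : CharZero D := charZero_of_injective_algebraMap halgInj
      have h1 : n₀ ≤ 1 := by
        refine hchoose t 1 one_pos (by omega) ?_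
        rw [ht, Nat.choose_one_right]
        exact Nat.cast_ne_zero.2 (by omega)
      intro x
      have : n₀ = 1 := le_antisymm h1 hn₀pos
      rw [this]
      exact one_dvd _
  have hlc : ∀ x : D, ∃ l : L, algebraMap L D l = (φ x).leadingCoeff := fun x =>
    hinv _ (lc_mem φ x (hφ2 x))
  have ht0 : φ t ≠ 0 := fun h => by
    rw [h] at ht
    simp at ht
    omega
  obtain ⟨lt', hlt'⟩ := hlc t
  have hlt0 : lt' ≠ 0 := fun h =>
    (Polynomial.leadingCoeff_ne_zero.2 ht0) (by rw [← hlt', h, map_zero])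
  -- main induction: everything lies in L[t]
  have hadj : ∀ m : ℕ, ∀ x : D, (φ x).natDegree = m → x ∈ Algebra.adjoin L ({t} : Set D) := by
    intro m
    induction m using Nat.strong_induction_on with
    | _ m IH =>
      intro x hxm
      by_cases h0 : (φ x).natDegree = 0
      · obtain ⟨l, hl⟩ := hinv x (mem_expInv_of_natDegree_eq_zero φ hφ0 h0)
        exact hl ▸ Subalgebra.algebraMap_mem _ l
      · obtain ⟨q, hq⟩ := hdvd x
        obtain ⟨lb, hlb⟩ := hlc x
        have hx0 : φ x ≠ 0 := fun h => h0 (by rw [h]; simp)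
        have hlb0 : lb ≠ 0 := fun h =>
          (Polynomial.leadingCoeff_ne_zero.2 hx0) (by rw [← hlb, h, map_zero])
        set lam : L := lb / lt' ^ q with hlam
        have hlam0 : lam ≠ 0 := div_ne_zero hlb0 (pow_ne_zero q hlt0)
        set G : D[X] := C (algebraMap L D lam) * (φ t) ^ q with hG
        have hGlc : G.leadingCoeff = algebraMap L D lb := by
          rw [hG, Polynomial.leadingCoeff_mul, Polynomial.leadingCoeff_C,
            Polynomial.leadingCoeff_pow, ← hlt', ← map_pow, ← map_mul, hlam,
            div_mul_cancel₀ _ (pow_ne_zero q hlt0)]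
        have hGlc0 : G.leadingCoeff ≠ 0 := by
          rw [hGlc, Ne, map_eq_zero_iff _ halgInj]
          exact hlb0
        have hG0 : G ≠ 0 := Polynomial.leadingCoeff_ne_zero.1 hGlc0
        have hGdeg : G.natDegree = (φ x).natDegree := by
          rw [hG, Polynomial.natDegree_mul (by
            rw [Ne, Polynomial.C_eq_zero, map_eq_zero_iff _ halgInj]
            exact hlam0) (pow_ne_zero q ht0),
            Polynomial.natDegree_C, Polynomial.natDegree_pow, ht, hq]
          ring
        have hlcx : (φ x).leadingCoeff = G.leadingCoeff := by rw [hGlc, hlb]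
        have hdegeq : (φ x).degree = G.degree := by
          rw [Polynomial.degree_eq_natDegree hx0, Polynomial.degree_eq_natDegree hG0, hGdeg]
        have hsub := Polynomial.degree_sub_lt hdegeq hx0 hlcx
        have hsubre : φ (x - algebraMap L D lam * t ^ q) = φ x - G := by
          rw [map_sub, map_mul, map_pow, AlgHom.commutes, hG, Polynomial.algebraMap_apply]
        by_cases hzero : x - algebraMap L D lam * t ^ q = 0
        · have hxeq : x = algebraMap L D lam * t ^ q := by
            rw [← sub_eq_zero]
            exact hzero
          rw [hxeq]
          exact mul_mem (Subalgebra.algebraMap_mem _ _)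
            (pow_mem (Algebra.self_mem_adjoin_singleton L t) q)
        · have hne : φ (x - algebraMap L D lam * t ^ q) ≠ 0 := fun h => hzero (hphi0 _ h)
          have h2 : (φ (x - algebraMap L D lam * t ^ q)).degree < (φ x).degree := by
            rw [hsubre]
            exact hsub
          have h3 := Polynomial.natDegree_lt_natDegree hne h2
          have hmem := IH _ (by omega) (x - algebraMap L D lam * t ^ q) rfl
          have hxeq : x = (x - algebraMap L D lam * t ^ q) + algebraMap L D lam * t ^ q := by
            ring
          rw [hxeq]
          exact add_mem hmem (mul_mem (Subalgebra.algebraMap_mem _ _)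
            (pow_mem (Algebra.self_mem_adjoin_singleton L t) q))
  have htrans : ¬ IsAlgebraic L t := fun halg => by
    have := natDegree_eq_zero_of_isAlgebraic φ hφ0 halg
    omega
  have hsurj : Function.Surjective (Polynomial.aeval t : L[X] →ₐ[L] D) := by
    intro x
    have hx : x ∈ Algebra.adjoin L ({t} : Set D) := hadj _ x rfl
    rw [Algebra.adjoin_singleton_eq_range_aeval] at hx
    obtain ⟨p, hp⟩ := hx
    exact ⟨p, hp⟩
  have hinj2 : Function.Injective (Polynomial.aeval t : L[X] →ₐ[L] D) := by
    rw [injective_iff_map_eq_zero]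
    intro p hp
    by_contra hp0
    exact htrans ⟨p, hp0, hp⟩
  exact ⟨(AlgEquiv.ofBijective (Polynomial.aeval t : L[X] →ₐ[L] D) ⟨hinj2, hsurj⟩).symm⟩
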